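/- Let H be a complex Hilbert space and let A, B, C be bounded linear operators on H. Suppose there are constants M > 0 and δ > 0 such that ‖exp(−t•A)‖ ≤ M·e^{−δt} for all t ≥ 0. Then for every x ≥ 0 the Bochner integral R_x = ∫_x^∞ exp(−t•A) ∘ B ∘ C ∘ exp(−t•A) dt converges in the bounded operators on H; it satisfies the norm bound ‖R_x‖ ≤ (M²·‖B‖·‖C‖/(2δ))·e^{−2δx}; it satisfies A ∘ R_x + R_x ∘ A = exp(−x•A) ∘ B ∘ C ∘ exp(−x•A) for every x ≥ 0; and the map x ↦ R_x is differentiable on (0,∞) with derivative dR_x/dx = −(A ∘ R_x + R_x ∘ A). -/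

import Mathlib

open MeasureTheory

set_option maxHeartbeats 1000000
set_option synthInstance.maxHeartbeats 400000

/-- Existence of the solution `R_x = ∫_x^∞ e^{-tA} B C e^{-tA} dt` of Lyapunov's equation for
a bounded operator `A` generating an exponentially decaying semigroup
(Lemma 2.2(i) of the paper, bounded-operator form). -/
theorem lyapunov_integral_solution
    {H : Type*} [NormedAddCommGroup H] [InnerProductSpace ℂ H] [CompleteSpace H]
    (A B C : H →L[ℂ] H) (M δ : ℝ) (hM : 0 < M) (hδ : 0 < δ)
    (hA : ∀ t : ℝ, 0 ≤ t → ‖NormedSpace.exp (-(t • A))‖ ≤ M * Real.exp (-δ * t))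
    (R : ℝ → (H →L[ℂ] H))
    (hR : ∀ x : ℝ, 0 ≤ x → R x = ∫ t in Set.Ioi x,
      NormedSpace.exp (-(t • A)) * B * C * NormedSpace.exp (-(t • A))) :
    (∀ x : ℝ, 0 ≤ x → MeasureTheory.IntegrableOn
        (fun t : ℝ => NormedSpace.exp (-(t • A)) * B * C * NormedSpace.exp (-(t • A)))
        (Set.Ioi x)) ∧
    (∀ x : ℝ, 0 ≤ x →
        ‖R x‖ ≤ M ^ 2 * ‖B‖ * ‖C‖ / (2 * δ) * Real.exp (-(2 * δ) * x)) ∧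
    (∀ x : ℝ, 0 ≤ x → A * R x + R x * A
        = NormedSpace.exp (-(x • A)) * B * C * NormedSpace.exp (-(x • A))) ∧
    (∀ x : ℝ, 0 < x → HasDerivAt R (-(A * R x + R x * A)) x) := by
  set E : ℝ → (H →L[ℂ] H) := fun t => NormedSpace.exp (-(t • A)) with hE
  set f : ℝ → (H →L[ℂ] H) := fun t => E t * B * C * E t with hf
  have hexp : ∀ t : ℝ, E t = NormedSpace.exp (t • (-A)) := by
    intro t
    rw [hE, smul_neg]
  -- derivatives of E
  have hEderivL : ∀ t : ℝ, HasDerivAt E (-(A * E t)) t := by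
    intro t
    have h := hasDerivAt_exp_smul_const' (𝕂 := ℝ) (-A) t
    have : HasDerivAt E ((-A) * NormedSpace.exp (t • (-A))) t := by
      refine HasDerivAt.congr_of_eventuallyEq h ?_
      filter_upwards with u using (hexp u)
    rw [← hexp t] at this
    simpa [neg_mul] using this
  have hEderivR : ∀ t : ℝ, HasDerivAt E (-(E t * A)) t := by
    intro t
    have h := hasDerivAt_exp_smul_const (𝕂 := ℝ) (-A) t
    have : HasDerivAt E (NormedSpace.exp (t • (-A)) * (-A)) t := by
      refine HasDerivAt.congr_of_eventuallyEq h ?_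
      filter_upwards with u using (hexp u)
    rw [← hexp t] at this
    simpa [mul_neg] using this
  have hEcont : Continuous E :=
    continuous_iff_continuousAt.mpr fun t => (hEderivL t).continuousAt
  have hfcont : Continuous f :=
    ((hEcont.mul continuous_const).mul continuous_const).mul hEcont
  -- norm bound on f
  have hbound : ∀ t : ℝ, 0 ≤ t →
      ‖f t‖ ≤ M ^ 2 * ‖B‖ * ‖C‖ * Real.exp (-(2 * δ) * t) := by
    intro t ht
    have hAt := hA t ht
    have hE0 : (0:ℝ) ≤ ‖E t‖ := norm_nonneg _
    have h1 : ‖f t‖ ≤ ‖E t‖ * ‖B‖ * ‖C‖ * ‖E t‖ := by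
      calc ‖f t‖ ≤ ‖E t * B * C‖ * ‖E t‖ := norm_mul_le _ _
        _ ≤ ‖E t * B‖ * ‖C‖ * ‖E t‖ := by
            gcongr; exact norm_mul_le _ _
        _ ≤ ‖E t‖ * ‖B‖ * ‖C‖ * ‖E t‖ := by
            gcongr; exact norm_mul_le _ _
    have hee : Real.exp (-(2 * δ) * t) = Real.exp (-δ * t) * Real.exp (-δ * t) := by
      rw [← Real.exp_add]; ring_nf
    have hexp_pos : (0:ℝ) < Real.exp (-δ * t) := Real.exp_pos _
    refine h1.trans ?_
    rw [hee]
    nlinarith [norm_nonneg B, norm_nonneg C, mul_nonneg (norm_nonneg B) (norm_nonneg C),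
      mul_le_mul hAt hAt hE0 (by positivity : (0:ℝ) ≤ M * Real.exp (-δ * t))]
  have h2δ : (0:ℝ) < 2 * δ := by linarith
  -- integrability
  have hint : ∀ x : ℝ, 0 ≤ x → MeasureTheory.IntegrableOn f (Set.Ioi x) := by
    intro x hx
    refine Integrable.mono'
      ((exp_neg_integrableOn_Ioi x h2δ).const_mul (M ^ 2 * ‖B‖ * ‖C‖))
      hfcont.aestronglyMeasurable.restrict ?_
    filter_upwards [ae_restrict_mem measurableSet_Ioi] with t ht
    exact hbound t (hx.trans (le_of_lt ht))
  -- the value of the dominating integral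
  have hexpint : ∀ x : ℝ, (∫ t in Set.Ioi x, Real.exp (-(2 * δ) * t))
      = Real.exp (-(2 * δ) * x) / (2 * δ) := by
    intro x
    have hg : ∀ t : ℝ, HasDerivAt (fun u : ℝ => -Real.exp (-(2 * δ) * u) / (2 * δ))
        (Real.exp (-(2 * δ) * t)) t := by
      intro t
      have h1 : HasDerivAt (fun u : ℝ => -(2 * δ) * u) (-(2 * δ)) t := by
        simpa using (hasDerivAt_id t).const_mul (-(2 * δ))
      have h2 := (Real.hasDerivAt_exp (-(2 * δ) * t)).comp t h1
      have h3 := (h2.neg).div_const (2 * δ)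
      have h4 : HasDerivAt (fun u : ℝ => -Real.exp (-(2 * δ) * u) / (2 * δ)) _ t := h3
      convert h4 using 1
      rw [mul_neg, neg_neg, mul_div_assoc, div_self h2δ.ne', mul_one]
    have htend : Filter.Tendsto (fun u : ℝ => -Real.exp (-(2 * δ) * u) / (2 * δ))
        Filter.atTop (nhds 0) := by
      have : Filter.Tendsto (fun u : ℝ => Real.exp (-(2 * δ) * u)) Filter.atTop (nhds 0) :=
        Real.tendsto_exp_atBot.comp
          (Filter.tendsto_id.const_mul_atTop_of_neg (by linarith))
      simpa using (this.neg).div_const (2 * δ)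
    have := MeasureTheory.integral_Ioi_of_hasDerivAt_of_tendsto
      (f := fun u : ℝ => -Real.exp (-(2 * δ) * u) / (2 * δ))
      (f' := fun u : ℝ => Real.exp (-(2 * δ) * u))
      (a := x) (m := 0)
      ((hg x).continuousAt.continuousWithinAt)
      (fun t _ => hg t) (exp_neg_integrableOn_Ioi x h2δ) htend
    rw [this]; ring
  -- the norm bound
  have hnorm : ∀ x : ℝ, 0 ≤ x →
      ‖R x‖ ≤ M ^ 2 * ‖B‖ * ‖C‖ / (2 * δ) * Real.exp (-(2 * δ) * x) := by
    intro x hx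
    rw [hR x hx]
    calc ‖∫ t in Set.Ioi x, f t‖ ≤ ∫ t in Set.Ioi x, ‖f t‖ :=
          norm_integral_le_integral_norm _
      _ ≤ ∫ t in Set.Ioi x, M ^ 2 * ‖B‖ * ‖C‖ * Real.exp (-(2 * δ) * t) := by
          refine setIntegral_mono_on (hint x hx).norm
            ((exp_neg_integrableOn_Ioi x h2δ).const_mul (M ^ 2 * ‖B‖ * ‖C‖))
            measurableSet_Ioi ?_
          intro t ht
          exact hbound t (hx.trans (le_of_lt ht))
      _ = M ^ 2 * ‖B‖ * ‖C‖ / (2 * δ) * Real.exp (-(2 * δ) * x) := by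
          rw [MeasureTheory.integral_const_mul, hexpint x]; ring
  -- derivative of f
  have hfderiv : ∀ t : ℝ, HasDerivAt f (-(A * f t + f t * A)) t := by
    intro t
    have d1 : HasDerivAt (fun u => E u * B) (-(A * E t) * B) t :=
      (hEderivL t).mul_const B
    have d2 : HasDerivAt (fun u => E u * B * C) (-(A * E t) * B * C) t :=
      d1.mul_const C
    have d3 := d2.mul (hEderivR t)
    have d4 : HasDerivAt f _ t := d3
    convert d4 using 1
    noncomm_ring
  -- f tends to 0 at infinity
  have hftend : Filter.Tendsto f Filter.atTop (nhds 0) := by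
    have hb : Filter.Tendsto (fun t : ℝ => M ^ 2 * ‖B‖ * ‖C‖ * Real.exp (-(2 * δ) * t))
        Filter.atTop (nhds 0) := by
      have : Filter.Tendsto (fun t : ℝ => Real.exp (-(2 * δ) * t)) Filter.atTop (nhds 0) :=
        Real.tendsto_exp_atBot.comp
          (Filter.tendsto_id.const_mul_atTop_of_neg (by linarith))
      simpa using this.const_mul (M ^ 2 * ‖B‖ * ‖C‖)
    refine squeeze_zero_norm' ?_ hb
    filter_upwards [Filter.eventually_ge_atTop (0:ℝ)] with t ht using hbound t ht
  -- the Lyapunov identity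
  have hlyap : ∀ x : ℝ, 0 ≤ x → A * R x + R x * A = f x := by
    intro x hx
    have hintf := hint x hx
    -- integrability of A * f and f * A
    have hLA : MeasureTheory.IntegrableOn (fun t => A * f t) (Set.Ioi x) :=
      ((ContinuousLinearMap.mul ℂ (H →L[ℂ] H) A).integrable_comp hintf)
    have hRA : MeasureTheory.IntegrableOn (fun t => f t * A) (Set.Ioi x) :=
      (((ContinuousLinearMap.mul ℂ (H →L[ℂ] H)).flip A).integrable_comp hintf)
    have hsum : MeasureTheory.IntegrableOn (fun t => A * f t + f t * A) (Set.Ioi x) :=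
      hLA.add hRA
    have hkey := MeasureTheory.integral_Ioi_of_hasDerivAt_of_tendsto
      (f := f) (f' := fun t => -(A * f t + f t * A)) (a := x) (m := 0)
      hfcont.continuousWithinAt (fun t _ => hfderiv t) hsum.neg hftend
    rw [MeasureTheory.integral_neg] at hkey
    have hkey2 : (∫ t in Set.Ioi x, (A * f t + f t * A)) = f x := by
      have := neg_eq_iff_eq_neg.mp hkey
      rw [this]; abel
    have hAint : A * R x = ∫ t in Set.Ioi x, A * f t := by
      rw [hR x hx]
      exact (ContinuousLinearMap.integral_comp_comm
        (ContinuousLinearMap.mul ℂ (H →L[ℂ] H) A) hintf).symm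
    have hAint' : R x * A = ∫ t in Set.Ioi x, f t * A := by
      rw [hR x hx]
      exact (ContinuousLinearMap.integral_comp_comm
        ((ContinuousLinearMap.mul ℂ (H →L[ℂ] H)).flip A) hintf).symm
    rw [hAint, hAint', ← MeasureTheory.integral_add hLA hRA, hkey2]
  refine ⟨hint, hnorm, hlyap, ?_⟩
  -- the derivative statement
  intro x hx
  have hIoi0 := hint 0 le_rfl
  have hFderiv : HasDerivAt (fun y => ∫ t in (0:ℝ)..y, f t) (f x) x := by
    refine intervalIntegral.integral_hasDerivAt_right
      ((intervalIntegrable_iff_integrableOn_Ioc_of_le hx.le).mpr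
        (hIoi0.mono_set Set.Ioc_subset_Ioi_self))
      hfcont.stronglyMeasurable.stronglyMeasurableAtFilter
      hfcont.continuousAt
  have heq : ∀ᶠ y in nhds x, R y = R 0 - ∫ t in (0:ℝ)..y, f t := by
    filter_upwards [Ioi_mem_nhds hx] with y hy
    have hy0 : (0:ℝ) < y := hy
    rw [hR y hy0.le, hR 0 le_rfl, intervalIntegral.integral_of_le hy0.le]
    have hsplit : (∫ t in Set.Ioi (0:ℝ), f t)
        = (∫ t in Set.Ioc 0 y, f t) + ∫ t in Set.Ioi y, f t := by
      rw [← MeasureTheory.setIntegral_union (Set.Ioc_disjoint_Ioi le_rfl)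
        measurableSet_Ioi (hIoi0.mono_set Set.Ioc_subset_Ioi_self) (hint y hy0.le),
        Set.Ioc_union_Ioi_eq_Ioi hy0.le]
    rw [hsplit]; abel
  have hder : HasDerivAt (fun y => R 0 - ∫ t in (0:ℝ)..y, f t) (-(f x)) x :=
    hFderiv.const_sub (R 0)
  have := hder.congr_of_eventuallyEq heq
  rwa [← hlyap x hx.le] at this
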